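/- Let γ(t; a, b) = t^{a−1} e^{−t/b} / (Γ(a) b^{a}) for t > 0 denote the Gamma density with shape a > 0 and scale b > 0. Let K ≥ 1 and let (a_1, b_1), …, (a_K, b_K) be pairwise distinct pairs of positive reals. Then the functions t ↦ γ(t; a_k, b_k), k = 1, …, K, viewed as real-valued functions on (0, ∞), are linearly independent over ℝ: if c_1, …, c_K ∈ ℝ satisfy ∑_{k=1}^K c_k γ(t; a_k, b_k) = 0 for all t > 0, then c_1 = ⋯ = c_K = 0. -/

import Mathlib

open Filter

/-- The Gamma probability density with shape `a > 0` and scale `b > 0`: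
`γ(t; a, b) = t^(a-1) e^(-t/b) / (Γ(a) bᵃ)` (real powers). -/
noncomputable def gammaPdf (a b t : ℝ) : ℝ :=
  t ^ (a - 1) * Real.exp (-t / b) / (Real.Gamma a * b ^ a)

lemma gammaPdf_pos {a b t : ℝ} (ha : 0 < a) (hb : 0 < b) (ht : 0 < t) :
    0 < gammaPdf a b t :=
  div_pos (mul_pos (Real.rpow_pos_of_pos ht _) (Real.exp_pos _))
    (mul_pos (Real.Gamma_pos_of_pos ha) (Real.rpow_pos_of_pos hb _))

lemma gammaPdf_ratio_eq {a b a' b' t : ℝ} (ha : 0 < a) (hb : 0 < b) (ha' : 0 < a')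
    (hb' : 0 < b') (ht : 0 < t) :
    gammaPdf a b t / gammaPdf a' b' t =
      (Real.Gamma a' * b' ^ a' / (Real.Gamma a * b ^ a)) *
        (t ^ (a - a') * Real.exp (-(1/b - 1/b') * t)) := by
  unfold gammaPdf
  have h1 : t ^ (a - a') = t ^ (a - 1) / t ^ (a' - 1) := by
    rw [← Real.rpow_sub ht]; ring_nf
  have h2 : Real.exp (-(1/b - 1/b') * t) = Real.exp (-t / b) / Real.exp (-t / b') := by
    rw [← Real.exp_sub]; ring_nf
  rw [h1, h2]
  have := (Real.rpow_pos_of_pos ht (a-1)).ne'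
  have := (Real.rpow_pos_of_pos ht (a'-1)).ne'
  have := (Real.exp_pos (-t/b)).ne'
  have := (Real.exp_pos (-t/b')).ne'
  have := (Real.Gamma_pos_of_pos ha).ne'
  have := (Real.Gamma_pos_of_pos ha').ne'
  have := (Real.rpow_pos_of_pos hb a).ne'
  have := (Real.rpow_pos_of_pos hb' a').ne'
  field_simp

lemma key_tendsto {s β : ℝ} (h : 0 < β ∨ (β = 0 ∧ s < 0)) :
    Tendsto (fun t : ℝ => t ^ s * Real.exp (-β * t)) atTop (nhds 0) := by
  rcases h with hβ | ⟨hβ, hs⟩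
  · exact tendsto_rpow_mul_exp_neg_mul_atTop_nhds_zero s β hβ
  · simp only [hβ, neg_zero, zero_mul, Real.exp_zero, mul_one]
    have := tendsto_rpow_neg_atTop (y := -s) (by linarith)
    simpa using this

/-- Gamma densities with pairwise distinct (shape, scale) parameters
are linearly independent as functions on `(0, ∞)`. -/
theorem stmt10 (K : ℕ) (hK : 1 ≤ K) (a b : Fin K → ℝ)
    (ha : ∀ k, 0 < a k) (hb : ∀ k, 0 < b k)
    (hdist : ∀ k l, k ≠ l → (a k, b k) ≠ (a l, b l)) :
    ∀ c : Fin K → ℝ,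
      (∀ t : ℝ, 0 < t → ∑ k, c k * gammaPdf (a k) (b k) t = 0) →
      ∀ k, c k = 0 := by
  intro c hc
  by_contra h
  push_neg at h
  obtain ⟨k0, hk0⟩ := h
  set S : Finset (Fin K) := Finset.univ.filter (fun k => c k ≠ 0) with hS
  have hk0S : k0 ∈ S := by simp [hS, hk0]
  obtain ⟨m0, hm0S, hm0⟩ := S.exists_max_image b ⟨k0, hk0S⟩
  set S2 := S.filter (fun k => b k = b m0) with hS2
  have hm0S2 : m0 ∈ S2 := by simp [hS2, hm0S]
  obtain ⟨m, hmS2, hm⟩ := S2.exists_max_image a ⟨m0, hm0S2⟩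
  have hmS : m ∈ S := (Finset.mem_filter.mp hmS2).1
  have hbm : b m = b m0 := (Finset.mem_filter.mp hmS2).2
  have hcm : c m ≠ 0 := by simpa [hS] using hmS
  -- key: every other index in S has strictly smaller (b, a) lexicographically
  have hkey : ∀ k ∈ S, k ≠ m →
      0 < 1 / b k - 1 / b m ∨ (1 / b k - 1 / b m = 0 ∧ a k - a m < 0) := by
    intro k hkS hkm
    have hble : b k ≤ b m := hbm ▸ hm0 k hkS
    rcases lt_or_eq_of_le hble with hlt | heq
    · left
      have := one_div_lt_one_div_of_lt (hb k) hlt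
      linarith
    · right
      refine ⟨by rw [heq]; ring, ?_⟩
      have hkS2 : k ∈ S2 := by
        simp only [hS2, Finset.mem_filter]
        exact ⟨hkS, heq.trans hbm⟩
      have hale : a k ≤ a m := hm k hkS2
      have hane : a k ≠ a m := by
        intro hEq
        exact hdist k m hkm (by rw [hEq, heq])
      have := lt_of_le_of_ne hale hane
      linarith
  -- each term tends to the right limit
  have htend : ∀ k : Fin K,
      Tendsto (fun t => c k * (gammaPdf (a k) (b k) t / gammaPdf (a m) (b m) t)) atTop
        (nhds (if k = m then c m else 0)) := by
    intro k
    by_cases hkm : k = m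
    · subst hkm
      simp only [if_pos rfl]
      have hev : (fun t : ℝ => c k * (gammaPdf (a k) (b k) t / gammaPdf (a k) (b k) t))
          =ᶠ[atTop] (fun _ => c k) := by
        filter_upwards [eventually_gt_atTop 0] with t ht
        rw [div_self (gammaPdf_pos (ha k) (hb k) ht).ne', mul_one]
      exact (tendsto_congr' hev).mpr tendsto_const_nhds
    · by_cases hck : c k = 0
      · simp only [hck, zero_mul, if_neg hkm]; exact tendsto_const_nhds
      · have hkS : k ∈ S := by simp [hS, hck]
        have hcase := hkey k hkS hkm
        set C : ℝ := Real.Gamma (a m) * b m ^ (a m) / (Real.Gamma (a k) * b k ^ (a k)) with hC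
        have hev : (fun t : ℝ => (c k * C) *
              (t ^ (a k - a m) * Real.exp (-(1 / b k - 1 / b m) * t)))
            =ᶠ[atTop]
            (fun t => c k * (gammaPdf (a k) (b k) t / gammaPdf (a m) (b m) t)) := by
          filter_upwards [eventually_gt_atTop 0] with t ht
          rw [gammaPdf_ratio_eq (ha k) (hb k) (ha m) (hb m) ht, ← hC]
          ring
        have hlim := (key_tendsto hcase).const_mul (c k * C)
        rw [mul_zero] at hlim
        simp only [if_neg hkm]
        exact (tendsto_congr' hev).mp hlim
  have hsum := tendsto_finset_sum Finset.univ (fun k _ => htend k)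
  have hlimval : ∑ k, (if k = m then c m else 0) = c m := by simp
  rw [hlimval] at hsum
  -- but the sum is eventually 0
  have hzero : (fun t : ℝ =>
      ∑ k, c k * (gammaPdf (a k) (b k) t / gammaPdf (a m) (b m) t)) =ᶠ[atTop]
      (fun _ => (0 : ℝ)) := by
    filter_upwards [eventually_gt_atTop 0] with t ht
    have : ∑ k, c k * (gammaPdf (a k) (b k) t / gammaPdf (a m) (b m) t) =
        (∑ k, c k * gammaPdf (a k) (b k) t) / gammaPdf (a m) (b m) t := by
      rw [Finset.sum_div]
      exact Finset.sum_congr rfl fun k _ => (mul_div_assoc _ _ _).symm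
    rw [this, hc t ht, zero_div]
  have : c m = 0 :=
    tendsto_nhds_unique ((tendsto_congr' hzero).mp hsum) tendsto_const_nhds
  exact hcm this
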